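/- Let p ∈ (0,1) and let X ~ Bernoulli(p) be defined on a probability space (Ω, F, P). Let B_1, B_2, ... be a sequence of events on the same space with P(B_n) → 1 as n → ∞, and let Y be a random vector (or matrix) on the same space (possibly depending on n). Then I(X; Y) → 0 as n → ∞ if and only if I(X; Y | B_n) → 0 as n → ∞, where I(X; Y | B_n) denotes the mutual information computed under the conditional probability measure given B_n. -/

import Mathlib

open Filter Set MeasureTheory ProbabilityTheory

noncomputable section

/-- The Bernoulli distribution with parameter `p` on `Bool`. -/
def bernoulliBool (p : ℝ) : Measure Bool :=
  ENNReal.ofReal p • Measure.dirac true + ENNReal.ofReal (1 - p) • Measure.dirac false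

/-- Mutual information `I(X; Y)` between a `Bool`-valued random variable `X` and an arbitrary
random vector `Y`, under the probability measure `μ`:
`I(X;Y) = H(X) - H(X|Y)`, where `H(X) = h(P(X = 1))` with `h` the binary entropy function,
and `H(X|Y) = E[h(P(X = 1 | Y))]` with `P(X = 1 | Y)` the conditional probability of
`{X = 1}` given the σ-algebra generated by `Y`. -/
def miBool {Ω : Type*} {mΩ : MeasurableSpace Ω} (μ : Measure Ω)
    {E : Type*} [MeasurableSpace E] (X : Ω → Bool) (Y : Ω → E) : ℝ :=
  Real.binEntropy (μ {ω | X ω = true}).toReal -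
    ∫ ω, Real.binEntropy
      ((μ[(fun ω' => if X ω' then (1:ℝ) else 0) | MeasurableSpace.comap Y inferInstance]) ω) ∂μ

noncomputable section

lemma integrable_of_ae_bdd {Ω : Type*} [MeasurableSpace Ω] (μ : Measure Ω)
    [IsFiniteMeasure μ] {g : Ω → ℝ}
    (hg : AEStronglyMeasurable g μ) (C : ℝ) (h : ∀ᵐ x ∂μ, ‖g x‖ ≤ C) : Integrable g μ :=
  (integrable_const C).mono' hg h

variable {Ω : Type*} {m mΩ : MeasurableSpace Ω} {μ : Measure Ω}

lemma condexp_mem_Icc [IsProbabilityMeasure μ] (hm : m ≤ mΩ)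
    {f : Ω → ℝ} (hf : Integrable f μ) (hf0 : ∀ x, 0 ≤ f x) (hf1 : ∀ x, f x ≤ 1) :
    ∀ᵐ x ∂μ, 0 ≤ (μ[f|m]) x ∧ (μ[f|m]) x ≤ 1 := by
  haveI : SigmaFinite (μ.trim hm) := by infer_instance
  have h0 : 0 ≤ᵐ[μ] μ[f|m] := condExp_nonneg (Filter.Eventually.of_forall hf0)
  have h1 : μ[f|m] ≤ᵐ[μ] μ[(fun _ => (1:ℝ))|m] :=
    condExp_mono hf (integrable_const 1) (Filter.Eventually.of_forall hf1)
  rw [condExp_const hm] at h1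
  filter_upwards [h0, h1] with x hx0 hx1
  exact ⟨hx0, hx1⟩

lemma setIntegral_cond_eq (μ : Measure Ω) (B : Set Ω)
    {A : Set Ω} (hA : MeasurableSet A) (g : Ω → ℝ) :
    ∫ x in A, g x ∂(μ[|B]) = ((μ B).toReal)⁻¹ * ∫ x in A ∩ B, g x ∂μ := by
  rw [ProbabilityTheory.cond, Measure.restrict_smul, integral_smul_measure,
    Measure.restrict_restrict hA, ENNReal.toReal_inv, smul_eq_mul]

lemma setIntegral_condexp_diff_bound [IsProbabilityMeasure μ] (hm : m ≤ mΩ)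
    {f : Ω → ℝ} (hfm : Measurable f) (hf0 : ∀ x, 0 ≤ f x) (hf1 : ∀ x, f x ≤ 1)
    {B : Set Ω} (hB : MeasurableSet B) (hB0 : μ B ≠ 0)
    {A : Set Ω} (hA : MeasurableSet[m] A) :
    |∫ x in A, ((μ[f|m]) x - ((μ[|B])[f|m]) x) ∂(μ[|B])|
      ≤ ((μ B).toReal)⁻¹ * (2 * (μ Bᶜ).toReal) := by
  haveI hprob : IsProbabilityMeasure (μ[|B]) := cond_isProbabilityMeasure hB0
  haveI : SigmaFinite (μ.trim hm) := inferInstance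
  haveI : SigmaFinite ((μ[|B]).trim hm) := inferInstance
  have hA' : MeasurableSet A := hm _ hA
  have hfb : ∀ᵐ x ∂μ, ‖f x‖ ≤ 1 := Filter.Eventually.of_forall fun x => by
    rw [Real.norm_eq_abs, abs_of_nonneg (hf0 x)]; exact hf1 x
  have hfint : Integrable f μ := integrable_of_ae_bdd μ hfm.aestronglyMeasurable 1 hfb
  have hfintν : Integrable f (μ[|B]) := integrable_of_ae_bdd _ hfm.aestronglyMeasurable 1
    (Filter.Eventually.of_forall fun x => by
      rw [Real.norm_eq_abs, abs_of_nonneg (hf0 x)]; exact hf1 x)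
  have hZsm : StronglyMeasurable (μ[f|m]) := stronglyMeasurable_condExp.mono hm
  have hZicc := condexp_mem_Icc hm hfint hf0 hf1
  have hZb : ∀ᵐ x ∂μ, ‖(μ[f|m]) x‖ ≤ 1 := hZicc.mono fun x hx => by
    rw [Real.norm_eq_abs, abs_of_nonneg hx.1]; exact hx.2
  have hZbν : ∀ᵐ x ∂(μ[|B]), ‖(μ[f|m]) x‖ ≤ 1 :=
    hZb.filter_mono cond_absolutelyContinuous.ae_le
  have hZintν : Integrable (μ[f|m]) (μ[|B]) :=
    integrable_of_ae_bdd _ hZsm.aestronglyMeasurable 1 hZbν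
  have hZbintν : Integrable ((μ[|B])[f|m]) (μ[|B]) := integrable_condExp
  have s1 : ∫ x in A, ((μ[f|m]) x - ((μ[|B])[f|m]) x) ∂(μ[|B])
      = ∫ x in A, (μ[f|m]) x ∂(μ[|B]) - ∫ x in A, f x ∂(μ[|B]) := by
    rw [integral_sub hZintν.integrableOn hZbintν.integrableOn,
      setIntegral_condExp hm hfintν hA]
  have split : ∀ g : Ω → ℝ, Integrable g μ →
      ∫ x in A ∩ B, g x ∂μ = ∫ x in A, g x ∂μ - ∫ x in A ∩ Bᶜ, g x ∂μ := by
    intro g hg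
    have h := integral_inter_add_diff (f := g) (s := A) (t := B) hB hg.integrableOn
    rw [diff_eq] at h
    linarith
  have s2 : ∫ x in A, (μ[f|m]) x ∂(μ[|B])
      = ((μ B).toReal)⁻¹ * (∫ x in A, f x ∂μ - ∫ x in A ∩ Bᶜ, (μ[f|m]) x ∂μ) := by
    rw [setIntegral_cond_eq μ B hA', split _ integrable_condExp,
      setIntegral_condExp hm hfint hA]
  have s3 : ∫ x in A, f x ∂(μ[|B])
      = ((μ B).toReal)⁻¹ * (∫ x in A, f x ∂μ - ∫ x in A ∩ Bᶜ, f x ∂μ) := by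
    rw [setIntegral_cond_eq μ B hA', split _ hfint]
  rw [s1, s2, s3]
  have habs : ∀ g : Ω → ℝ, (∀ᵐ x ∂μ, ‖g x‖ ≤ 1) →
      |∫ x in A ∩ Bᶜ, g x ∂μ| ≤ (μ Bᶜ).toReal := by
    intro g hg
    have h1 : ‖∫ x in A ∩ Bᶜ, g x ∂μ‖ ≤ 1 * (μ (A ∩ Bᶜ)).toReal :=
      norm_setIntegral_le_of_norm_le_const_ae (measure_lt_top _ _) (ae_restrict_of_ae hg)
    rw [Real.norm_eq_abs, one_mul] at h1
    exact h1.trans (ENNReal.toReal_mono (measure_ne_top _ _)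
      (measure_mono inter_subset_right))
  have h2 := habs _ hZb
  have h3 := habs _ hfb
  have hq : (0:ℝ) ≤ ((μ B).toReal)⁻¹ := by positivity
  calc |((μ B).toReal)⁻¹ * (∫ x in A, f x ∂μ - ∫ x in A ∩ Bᶜ, (μ[f|m]) x ∂μ)
        - ((μ B).toReal)⁻¹ * (∫ x in A, f x ∂μ - ∫ x in A ∩ Bᶜ, f x ∂μ)|
      = ((μ B).toReal)⁻¹ * |∫ x in A ∩ Bᶜ, f x ∂μ - ∫ x in A ∩ Bᶜ, (μ[f|m]) x ∂μ| := by
        rw [← mul_sub, abs_mul, abs_of_nonneg hq]; ring_nf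
    _ ≤ ((μ B).toReal)⁻¹ * (2 * (μ Bᶜ).toReal) := by
        gcongr
        calc |∫ x in A ∩ Bᶜ, f x ∂μ - ∫ x in A ∩ Bᶜ, (μ[f|m]) x ∂μ|
            ≤ |∫ x in A ∩ Bᶜ, f x ∂μ| + |∫ x in A ∩ Bᶜ, (μ[f|m]) x ∂μ| := abs_sub _ _
          _ ≤ (μ Bᶜ).toReal + (μ Bᶜ).toReal := add_le_add h3 h2
          _ = 2 * (μ Bᶜ).toReal := by ring

end

noncomputable section
variable {Ω : Type*} {m mΩ : MeasurableSpace Ω} {μ : Measure Ω}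

lemma integral_abs_condexp_diff_bound [IsProbabilityMeasure μ] (hm : m ≤ mΩ)
    {f : Ω → ℝ} (hfm : Measurable f) (hf0 : ∀ x, 0 ≤ f x) (hf1 : ∀ x, f x ≤ 1)
    {B : Set Ω} (hB : MeasurableSet B) (hB0 : μ B ≠ 0) :
    ∫ x, |(μ[f|m]) x - ((μ[|B])[f|m]) x| ∂(μ[|B])
      ≤ ((μ B).toReal)⁻¹ * (4 * (μ Bᶜ).toReal) := by
  haveI hprob : IsProbabilityMeasure (μ[|B]) := cond_isProbabilityMeasure hB0
  haveI : SigmaFinite (μ.trim hm) := inferInstance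
  haveI : SigmaFinite ((μ[|B]).trim hm) := inferInstance
  set W : Ω → ℝ := fun x => (μ[f|m]) x - ((μ[|B])[f|m]) x with hWdef
  have hWsm : StronglyMeasurable[m] W :=
    stronglyMeasurable_condExp.sub stronglyMeasurable_condExp
  have hAm : MeasurableSet[m] {x | 0 ≤ W x} :=
    measurableSet_le measurable_const hWsm.measurable
  have hfb : ∀ᵐ x ∂μ, ‖f x‖ ≤ 1 := Filter.Eventually.of_forall fun x => by
    rw [Real.norm_eq_abs, abs_of_nonneg (hf0 x)]; exact hf1 x
  have hfint : Integrable f μ := integrable_of_ae_bdd μ hfm.aestronglyMeasurable 1 hfb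
  have hZicc := condexp_mem_Icc hm hfint hf0 hf1
  have hZb : ∀ᵐ x ∂μ, ‖(μ[f|m]) x‖ ≤ 1 := hZicc.mono fun x hx => by
    rw [Real.norm_eq_abs, abs_of_nonneg hx.1]; exact hx.2
  have hZintν : Integrable (μ[f|m]) (μ[|B]) :=
    integrable_of_ae_bdd _ (stronglyMeasurable_condExp.mono hm).aestronglyMeasurable 1
      (hZb.filter_mono cond_absolutelyContinuous.ae_le)
  have hWint : Integrable W (μ[|B]) := hZintν.sub integrable_condExp
  have key := fun (A : Set Ω) (hA : MeasurableSet[m] A) =>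
    setIntegral_condexp_diff_bound hm hfm hf0 hf1 hB hB0 hA
  have hsplit : ∫ x, |W x| ∂(μ[|B])
      = ∫ x in {x | 0 ≤ W x}, |W x| ∂(μ[|B]) + ∫ x in {x | 0 ≤ W x}ᶜ, |W x| ∂(μ[|B]) :=
    (integral_add_compl (hm _ hAm) hWint.abs).symm
  have e1 : ∫ x in {x | 0 ≤ W x}, |W x| ∂(μ[|B]) = ∫ x in {x | 0 ≤ W x}, W x ∂(μ[|B]) :=
    setIntegral_congr_fun (hm _ hAm) fun x hx => abs_of_nonneg hx
  have e2 : ∫ x in {x | 0 ≤ W x}ᶜ, |W x| ∂(μ[|B])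
      = - ∫ x in {x | 0 ≤ W x}ᶜ, W x ∂(μ[|B]) := by
    rw [← integral_neg]
    exact setIntegral_congr_fun (hm _ hAm).compl fun x hx =>
      abs_of_neg (lt_of_not_ge hx)
  have b1 := key _ hAm
  have b2 := key _ hAm.compl
  rw [hsplit, e1, e2]
  have hb1 : ∫ x in {x | 0 ≤ W x}, W x ∂(μ[|B]) ≤ ((μ B).toReal)⁻¹ * (2 * (μ Bᶜ).toReal) :=
    (le_abs_self _).trans b1
  have hb2 : - ∫ x in {x | 0 ≤ W x}ᶜ, W x ∂(μ[|B]) ≤ ((μ B).toReal)⁻¹ * (2 * (μ Bᶜ).toReal) :=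
    (neg_le_abs _).trans b2
  linarith

end

noncomputable section
variable {Ω : Type*} {m mΩ : MeasurableSpace Ω} {μ : Measure Ω}

lemma entPart_bound [IsProbabilityMeasure μ] (hm : m ≤ mΩ)
    {f : Ω → ℝ} (hfm : Measurable f) (hf0 : ∀ x, 0 ≤ f x) (hf1 : ∀ x, f x ≤ 1)
    {B : Set Ω} (hB : MeasurableSet B) (hB0 : μ B ≠ 0)
    {ε r : ℝ} (hε : 0 < ε) (hr : 0 ≤ r)
    (hmod : ∀ a b : ℝ, 0 ≤ a → a ≤ 1 → 0 ≤ b → b ≤ 1 → |a - b| < ε →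
      |Real.binEntropy a - Real.binEntropy b| ≤ r) :
    |∫ x, Real.binEntropy ((μ[f|m]) x) ∂μ
        - ∫ x, Real.binEntropy (((μ[|B])[f|m]) x) ∂(μ[|B])|
      ≤ (((μ B).toReal)⁻¹ - 1) * Real.log 2 + (μ Bᶜ).toReal * Real.log 2
        + (r + Real.log 2 * (((μ B).toReal)⁻¹ * (4 * (μ Bᶜ).toReal) / ε)) := by
  haveI hprob : IsProbabilityMeasure (μ[|B]) := cond_isProbabilityMeasure hB0
  haveI : SigmaFinite (μ.trim hm) := inferInstance
  haveI : SigmaFinite ((μ[|B]).trim hm) := inferInstance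
  have hlog2 : (0:ℝ) ≤ Real.log 2 := Real.log_nonneg one_le_two
  have hfb : ∀ᵐ x ∂μ, ‖f x‖ ≤ 1 := Filter.Eventually.of_forall fun x => by
    rw [Real.norm_eq_abs, abs_of_nonneg (hf0 x)]; exact hf1 x
  have hfint : Integrable f μ := integrable_of_ae_bdd μ hfm.aestronglyMeasurable 1 hfb
  have hfintν : Integrable f (μ[|B]) := integrable_of_ae_bdd _ hfm.aestronglyMeasurable 1
    (Filter.Eventually.of_forall fun x => by
      rw [Real.norm_eq_abs, abs_of_nonneg (hf0 x)]; exact hf1 x)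
  have hZicc := condexp_mem_Icc hm hfint hf0 hf1
  have hZiccν : ∀ᵐ x ∂(μ[|B]), 0 ≤ (μ[f|m]) x ∧ (μ[f|m]) x ≤ 1 :=
    hZicc.filter_mono cond_absolutelyContinuous.ae_le
  have hZbicc : ∀ᵐ x ∂(μ[|B]), 0 ≤ ((μ[|B])[f|m]) x ∧ ((μ[|B])[f|m]) x ≤ 1 :=
    condexp_mem_Icc hm hfintν hf0 hf1
  set g : Ω → ℝ := fun x => Real.binEntropy ((μ[f|m]) x) with hgdef
  set gb : Ω → ℝ := fun x => Real.binEntropy (((μ[|B])[f|m]) x) with hgbdef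
  have hgsm : StronglyMeasurable g :=
    Real.binEntropy_continuous.comp_stronglyMeasurable (stronglyMeasurable_condExp.mono hm)
  have hgbsm : StronglyMeasurable gb :=
    Real.binEntropy_continuous.comp_stronglyMeasurable (stronglyMeasurable_condExp.mono hm)
  have hgb : ∀ᵐ x ∂μ, ‖g x‖ ≤ Real.log 2 := hZicc.mono fun x hx => by
    rw [Real.norm_eq_abs, abs_of_nonneg (Real.binEntropy_nonneg hx.1 hx.2)]
    exact Real.binEntropy_le_log_two
  have hgbν : ∀ᵐ x ∂(μ[|B]), ‖g x‖ ≤ Real.log 2 :=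
    hgb.filter_mono cond_absolutelyContinuous.ae_le
  have hgbbν : ∀ᵐ x ∂(μ[|B]), ‖gb x‖ ≤ Real.log 2 := hZbicc.mono fun x hx => by
    rw [Real.norm_eq_abs, abs_of_nonneg (Real.binEntropy_nonneg hx.1 hx.2)]
    exact Real.binEntropy_le_log_two
  have hgint : Integrable g μ := integrable_of_ae_bdd μ hgsm.aestronglyMeasurable _ hgb
  have hgintν : Integrable g (μ[|B]) := integrable_of_ae_bdd _ hgsm.aestronglyMeasurable _ hgbν
  have hgbintν : Integrable gb (μ[|B]) :=
    integrable_of_ae_bdd _ hgbsm.aestronglyMeasurable _ hgbbν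
  have hq0 : 0 < (μ B).toReal := ENNReal.toReal_pos hB0 (measure_ne_top _ _)
  have hq1 : (μ B).toReal ≤ 1 := by
    simpa using ENNReal.toReal_mono (by norm_num) (prob_le_one (μ := μ) (s := B))
  have hqinv : 1 ≤ ((μ B).toReal)⁻¹ := by
    rw [le_inv_comm₀ one_pos hq0]
    simpa using hq1
  -- part A : change of measure for the same integrand
  have hA : |∫ x, g x ∂μ - ∫ x, g x ∂(μ[|B])|
      ≤ (((μ B).toReal)⁻¹ - 1) * Real.log 2 + (μ Bᶜ).toReal * Real.log 2 := by
    have e1 : ∫ x, g x ∂(μ[|B]) = ((μ B).toReal)⁻¹ * ∫ x in B, g x ∂μ := by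
      rw [← setIntegral_univ (μ := μ[|B]) (f := g), setIntegral_cond_eq μ B MeasurableSet.univ,
        univ_inter]
    have e2 : ∫ x, g x ∂μ = ∫ x in B, g x ∂μ + ∫ x in Bᶜ, g x ∂μ :=
      (integral_add_compl hB hgint).symm
    have b1 : |∫ x in B, g x ∂μ| ≤ Real.log 2 := by
      have h := norm_setIntegral_le_of_norm_le_const_ae (μ := μ) (s := B)
        (measure_lt_top _ _) (ae_restrict_of_ae hgb)
      rw [Real.norm_eq_abs] at h
      have : μ.real B ≤ 1 := hq1
      nlinarith
    have b2 : |∫ x in Bᶜ, g x ∂μ| ≤ Real.log 2 * (μ Bᶜ).toReal := by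
      have h := norm_setIntegral_le_of_norm_le_const_ae (μ := μ) (s := Bᶜ)
        (measure_lt_top _ _) (ae_restrict_of_ae hgb)
      rwa [Real.norm_eq_abs] at h
    calc |∫ x, g x ∂μ - ∫ x, g x ∂(μ[|B])|
        = |(1 - ((μ B).toReal)⁻¹) * ∫ x in B, g x ∂μ + ∫ x in Bᶜ, g x ∂μ| := by
          rw [e1, e2]; ring_nf
      _ ≤ |(1 - ((μ B).toReal)⁻¹) * ∫ x in B, g x ∂μ| + |∫ x in Bᶜ, g x ∂μ| := abs_add_le _ _
      _ ≤ (((μ B).toReal)⁻¹ - 1) * Real.log 2 + (μ Bᶜ).toReal * Real.log 2 := by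
          rw [abs_mul, abs_sub_comm, abs_of_nonneg (by linarith)]
          exact add_le_add (mul_le_mul_of_nonneg_left b1 (by linarith))
            (b2.trans_eq (mul_comm _ _))
  -- part B : same measure, two condexps
  have hW : ∫ x, |(μ[f|m]) x - ((μ[|B])[f|m]) x| ∂(μ[|B])
      ≤ ((μ B).toReal)⁻¹ * (4 * (μ Bᶜ).toReal) :=
    integral_abs_condexp_diff_bound hm hfm hf0 hf1 hB hB0
  set Es : Set Ω := {x | ε ≤ |(μ[f|m]) x - ((μ[|B])[f|m]) x|} with hEsdef
  have hWmeas : Measurable fun x => |(μ[f|m]) x - ((μ[|B])[f|m]) x| :=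
    (((stronglyMeasurable_condExp.mono hm).measurable).sub
      ((stronglyMeasurable_condExp.mono hm).measurable)).abs
  have hEsm : MeasurableSet Es := hWmeas measurableSet_Ici
  have hZintν : Integrable (μ[f|m]) (μ[|B]) :=
    integrable_of_ae_bdd _ (stronglyMeasurable_condExp.mono hm).aestronglyMeasurable 1
      ((hZicc.mono fun x hx => by
        rw [Real.norm_eq_abs, abs_of_nonneg hx.1]; exact hx.2).filter_mono
        cond_absolutelyContinuous.ae_le)
  have hWintν : Integrable (fun x => |(μ[f|m]) x - ((μ[|B])[f|m]) x|) (μ[|B]) :=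
    (hZintν.sub integrable_condExp).abs
  have hmark := mul_meas_ge_le_integral_of_nonneg (μ := μ[|B])
    (f := fun x => |(μ[f|m]) x - ((μ[|B])[f|m]) x|)
    (Filter.Eventually.of_forall fun x => abs_nonneg _) hWintν ε
  have hmeasb : ((μ[|B]) Es).toReal ≤ ((μ B).toReal)⁻¹ * (4 * (μ Bᶜ).toReal) / ε := by
    rw [le_div_iff₀ hε]
    calc ((μ[|B]) Es).toReal * ε = ε * ((μ[|B]) Es).toReal := mul_comm _ _
      _ ≤ ∫ x, |(μ[f|m]) x - ((μ[|B])[f|m]) x| ∂(μ[|B]) := hmark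
      _ ≤ _ := hW
  have hpt : ∀ᵐ x ∂(μ[|B]), |g x - gb x| ≤ r + Es.indicator (fun _ => Real.log 2) x := by
    filter_upwards [hZiccν, hZbicc] with x hx1 hx2
    by_cases hxE : x ∈ Es
    · rw [Set.indicator_of_mem hxE]
      have h1 : 0 ≤ g x := Real.binEntropy_nonneg hx1.1 hx1.2
      have h2 : g x ≤ Real.log 2 := Real.binEntropy_le_log_two
      have h3 : 0 ≤ gb x := Real.binEntropy_nonneg hx2.1 hx2.2
      have h4 : gb x ≤ Real.log 2 := Real.binEntropy_le_log_two
      rw [abs_sub_le_iff]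
      constructor <;> linarith
    · rw [Set.indicator_of_notMem hxE]
      have hlt : |(μ[f|m]) x - ((μ[|B])[f|m]) x| < ε := lt_of_not_ge hxE
      simpa using hmod _ _ hx1.1 hx1.2 hx2.1 hx2.2 hlt
  have hint2 : Integrable (fun x => r + Es.indicator (fun _ => Real.log 2) x) (μ[|B]) :=
    (integrable_const r).add ((integrable_const (Real.log 2)).indicator hEsm)
  have hB2 : |∫ x, g x ∂(μ[|B]) - ∫ x, gb x ∂(μ[|B])|
      ≤ r + Real.log 2 * ((μ[|B]) Es).toReal := by
    rw [← integral_sub hgintν hgbintν]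
    calc |∫ x, (g x - gb x) ∂(μ[|B])|
        ≤ ∫ x, |g x - gb x| ∂(μ[|B]) := by
          simpa [Real.norm_eq_abs] using
            norm_integral_le_integral_norm (μ := μ[|B]) (f := fun x => g x - gb x)
      _ ≤ ∫ x, (r + Es.indicator (fun _ => Real.log 2) x) ∂(μ[|B]) :=
          integral_mono_ae (hgintν.sub hgbintν).abs hint2 hpt
      _ = r + Real.log 2 * ((μ[|B]) Es).toReal := by
          rw [integral_add (integrable_const r) ((integrable_const _).indicator hEsm),
            integral_const, integral_indicator_const _ hEsm]
          simp [mul_comm]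
          left; rfl
  calc |∫ x, g x ∂μ - ∫ x, gb x ∂(μ[|B])|
      ≤ |∫ x, g x ∂μ - ∫ x, g x ∂(μ[|B])| + |∫ x, g x ∂(μ[|B]) - ∫ x, gb x ∂(μ[|B])| :=
        abs_sub_le _ _ _
    _ ≤ (((μ B).toReal)⁻¹ - 1) * Real.log 2 + (μ Bᶜ).toReal * Real.log 2
        + (r + Real.log 2 * (((μ B).toReal)⁻¹ * (4 * (μ Bᶜ).toReal) / ε)) := by
        refine add_le_add hA (hB2.trans ?_)
        have := mul_le_mul_of_nonneg_left hmeasb hlog2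
        linarith

end


/-- **Conditioning on high-probability events preserves vanishing mutual information.**
Let `p ∈ (0,1)` and `X ~ Bernoulli(p)` on a probability space `(Ω, F, P)`.  Let
`B_1, B_2, …` be events on the same space with `P(B_n) → 1`, and let `Y_n` be a random
vector (matrix) on the same space.  Then `I(X; Y_n) → 0` if and only if
`I(X; Y_n | B_n) → 0`, where the conditional mutual information is computed under the
conditional probability measure `P(· | B_n)`. -/
theorem mutualInfo_tendsto_zero_iff_cond
    {Ω : Type*} [MeasurableSpace Ω] (μ : Measure Ω) [IsProbabilityMeasure μ]
    (p : ℝ) (hp0 : 0 < p) (hp1 : p < 1)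
    (X : Ω → Bool) (hXmeas : Measurable X)
    (hX : Measure.map X μ = bernoulliBool p)
    (B : ℕ → Set Ω) (hBmeas : ∀ n, MeasurableSet (B n))
    (hB : Tendsto (fun n => μ (B n)) atTop (nhds 1))
    (d : ℕ → ℕ) (Y : (n : ℕ) → Ω → (Fin (d n) → ℝ))
    (hYmeas : ∀ n, Measurable (Y n)) :
    Tendsto (fun n => miBool μ X (Y n)) atTop (nhds (0 : ℝ)) ↔
      Tendsto (fun n => miBool (μ[|B n]) X (Y n)) atTop (nhds (0 : ℝ)) := by
  classical
  have hSmeas : MeasurableSet {ω | X ω = true} := hXmeas (measurableSet_singleton true)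
  have hfm : Measurable (fun ω' => if X ω' then (1:ℝ) else 0) :=
    Measurable.ite hSmeas measurable_const measurable_const
  have hf0 : ∀ x, (0:ℝ) ≤ if X x then (1:ℝ) else 0 := fun x => by split <;> norm_num
  have hf1 : ∀ x, (if X x then (1:ℝ) else 0) ≤ 1 := fun x => by split <;> norm_num
  have hm : ∀ n, MeasurableSpace.comap (Y n) inferInstance ≤ ‹MeasurableSpace Ω› :=
    fun n => (hYmeas n).comap_le
  -- real-valued measures of B n and its complement
  have hq : Tendsto (fun n => (μ (B n)).toReal) atTop (nhds 1) := by
    have h := (ENNReal.tendsto_toReal (a := 1) (by norm_num)).comp hB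
    rw [ENNReal.toReal_one] at h
    exact h
  have hδeq : ∀ n, (μ (B n)ᶜ).toReal = 1 - (μ (B n)).toReal := by
    intro n
    rw [measure_compl (hBmeas n) (measure_ne_top _ _), measure_univ,
      ENNReal.toReal_sub_of_le prob_le_one (by norm_num), ENNReal.toReal_one]
  have hδ : Tendsto (fun n => (μ (B n)ᶜ).toReal) atTop (nhds 0) := by
    simp only [hδeq]
    simpa using (tendsto_const_nhds (x := (1:ℝ))).sub hq
  have hqinv : Tendsto (fun n => ((μ (B n)).toReal)⁻¹) atTop (nhds 1) := by
    simpa using hq.inv₀ one_ne_zero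
  have hB0 : ∀ᶠ n in atTop, μ (B n) ≠ 0 := by
    filter_upwards [hq.eventually_const_lt (by norm_num : (1:ℝ)/2 < 1)] with n hn h0
    rw [h0] at hn
    norm_num at hn
  -- Term 1 : entropy of marginals
  have hinter : Tendsto (fun n => (μ (B n ∩ {ω | X ω = true})).toReal) atTop
      (nhds (μ {ω | X ω = true}).toReal) := by
    apply tendsto_of_tendsto_of_tendsto_of_le_of_le
      (g := fun n => (μ {ω | X ω = true}).toReal - (μ (B n)ᶜ).toReal)
      (h := fun _ => (μ {ω | X ω = true}).toReal)
    · simpa using tendsto_const_nhds.sub hδ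
    · exact tendsto_const_nhds
    · intro n
      dsimp only
      have hsub : {ω | X ω = true} ⊆ (B n ∩ {ω | X ω = true}) ∪ (B n)ᶜ := by
        intro ω hω
        by_cases hωB : ω ∈ B n
        · exact Or.inl ⟨hωB, hω⟩
        · exact Or.inr hωB
      have h1 : μ {ω | X ω = true} ≤ μ (B n ∩ {ω | X ω = true}) + μ (B n)ᶜ :=
        (measure_mono hsub).trans (measure_union_le _ _)
      have h2 := ENNReal.toReal_mono
        (ENNReal.add_ne_top.mpr ⟨measure_ne_top _ _, measure_ne_top _ _⟩) h1
      rw [ENNReal.toReal_add (measure_ne_top _ _) (measure_ne_top _ _)] at h2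
      linarith
    · intro n
      dsimp only
      exact ENNReal.toReal_mono (measure_ne_top _ _) (measure_mono inter_subset_right)
  have hpν : Tendsto (fun n => ((μ[|B n]) {ω | X ω = true}).toReal) atTop
      (nhds (μ {ω | X ω = true}).toReal) := by
    have heq : ∀ n, ((μ[|B n]) {ω | X ω = true}).toReal
        = ((μ (B n)).toReal)⁻¹ * (μ (B n ∩ {ω | X ω = true})).toReal := by
      intro n
      rw [cond_apply (hBmeas n), ENNReal.toReal_mul, ENNReal.toReal_inv]
    simp only [heq]
    simpa using hqinv.mul hinter
  have hT1 : Tendsto (fun n => Real.binEntropy (μ {ω | X ω = true}).toReal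
      - Real.binEntropy (((μ[|B n]) {ω | X ω = true})).toReal) atTop (nhds 0) := by
    have h := (Real.binEntropy_continuous.tendsto _).comp hpν
    simpa using (tendsto_const_nhds
      (x := Real.binEntropy (μ {ω | X ω = true}).toReal)).sub h
  -- Term 2+3 : conditional entropy part
  have hT23 : Tendsto (fun n =>
      (∫ x, Real.binEntropy ((μ[(fun ω' => if X ω' then (1:ℝ) else 0)
          | MeasurableSpace.comap (Y n) inferInstance]) x) ∂μ)
      - ∫ x, Real.binEntropy (((μ[|B n])[(fun ω' => if X ω' then (1:ℝ) else 0)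
          | MeasurableSpace.comap (Y n) inferInstance]) x) ∂(μ[|B n])) atTop (nhds 0) := by
    rw [Metric.tendsto_atTop]
    intro s hs
    have huc : UniformContinuousOn Real.binEntropy (Icc 0 1) :=
      isCompact_Icc.uniformContinuousOn_of_continuous Real.binEntropy_continuous.continuousOn
    obtain ⟨ε, hε, hmod0⟩ := (Metric.uniformContinuousOn_iff).mp huc (s/4) (by linarith)
    have hmod : ∀ a b : ℝ, 0 ≤ a → a ≤ 1 → 0 ≤ b → b ≤ 1 → |a - b| < ε →
        |Real.binEntropy a - Real.binEntropy b| ≤ s/4 := by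
      intro a b ha0 ha1 hb0 hb1 hab
      have := hmod0 a ⟨ha0, ha1⟩ b ⟨hb0, hb1⟩ (by rwa [Real.dist_eq])
      rw [Real.dist_eq] at this
      exact this.le
    -- the bound sequence tends to s/4
    have hbnd : Tendsto (fun n => (((μ (B n)).toReal)⁻¹ - 1) * Real.log 2
        + (μ (B n)ᶜ).toReal * Real.log 2
        + (s/4 + Real.log 2 * (((μ (B n)).toReal)⁻¹ * (4 * (μ (B n)ᶜ).toReal) / ε)))
        atTop (nhds (s/4)) := by
      have h1 : Tendsto (fun n => (((μ (B n)).toReal)⁻¹ - 1) * Real.log 2) atTop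
          (nhds ((1 - 1) * Real.log 2)) :=
        (hqinv.sub (tendsto_const_nhds (x := (1:ℝ)))).mul tendsto_const_nhds
      have h2 : Tendsto (fun n => (μ (B n)ᶜ).toReal * Real.log 2) atTop
          (nhds (0 * Real.log 2)) := hδ.mul tendsto_const_nhds
      have h3 : Tendsto (fun n => Real.log 2
          * (((μ (B n)).toReal)⁻¹ * (4 * (μ (B n)ᶜ).toReal) / ε)) atTop
          (nhds (Real.log 2 * (1 * (4 * 0) / ε))) :=
        ((hqinv.mul (hδ.const_mul 4)).div_const ε).const_mul (Real.log 2)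
      have h4 : Tendsto (fun n => s/4 + Real.log 2
          * (((μ (B n)).toReal)⁻¹ * (4 * (μ (B n)ᶜ).toReal) / ε)) atTop
          (nhds (s/4 + Real.log 2 * (1 * (4 * 0) / ε))) :=
        (tendsto_const_nhds (x := s/4)).add h3
      have h5 := (h1.add h2).add h4
      norm_num at h5
      convert h5 using 2
    have hev := (hbnd.eventually_lt_const (by linarith : s/4 < s/2)).and hB0
    rw [eventually_atTop] at hev
    obtain ⟨N, hN⟩ := hev
    refine ⟨N, fun n hn => ?_⟩
    obtain ⟨hlt, h0⟩ := hN n hn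
    have hb := entPart_bound (μ := μ) (hm n) hfm hf0 hf1 (hBmeas n) h0 hε
      (by linarith : (0:ℝ) ≤ s/4) hmod
    rw [Real.dist_eq, sub_zero]
    calc |_| ≤ _ := hb
      _ < s/2 := hlt
      _ < s := by linarith
  -- combine
  have heq : ∀ n, miBool μ X (Y n) - miBool (μ[|B n]) X (Y n)
      = (Real.binEntropy (μ {ω | X ω = true}).toReal
          - Real.binEntropy (((μ[|B n]) {ω | X ω = true})).toReal)
        - ((∫ x, Real.binEntropy ((μ[(fun ω' => if X ω' then (1:ℝ) else 0)
            | MeasurableSpace.comap (Y n) inferInstance]) x) ∂μ)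
          - ∫ x, Real.binEntropy (((μ[|B n])[(fun ω' => if X ω' then (1:ℝ) else 0)
            | MeasurableSpace.comap (Y n) inferInstance]) x) ∂(μ[|B n])) := by
    intro n
    simp only [miBool]
    ring
  have hdiff : Tendsto (fun n => miBool μ X (Y n) - miBool (μ[|B n]) X (Y n)) atTop
      (nhds 0) := by
    simp only [heq]
    simpa using hT1.sub hT23
  constructor
  · intro h
    have h2 := h.sub hdiff
    have he : (fun n => miBool μ X (Y n)
        - (miBool μ X (Y n) - miBool (μ[|B n]) X (Y n)))
        = fun n => miBool (μ[|B n]) X (Y n) := funext fun n => by ring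
    rw [he] at h2
    simpa using h2
  · intro h
    have h2 := h.add hdiff
    have he : (fun n => miBool (μ[|B n]) X (Y n)
        + (miBool μ X (Y n) - miBool (μ[|B n]) X (Y n)))
        = fun n => miBool μ X (Y n) := funext fun n => by ring
    rw [he] at h2
    simpa using h2


end
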